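/- Budan–Fourier bound: Let P be a real polynomial of degree n and for x ∈ ℝ let ν_P(x) denote the number of sign changes in the sequence (P(x), P'(x), ..., P^{(n)}(x)) (ignoring zeros). Then for a < b, the number of roots of P in (a, b], counted with multiplicity, is at most ν_P(a) − ν_P(b). -/

import Mathlib

open Polynomial

/-- The number of sign changes in a finite sequence of reals, counted after
deleting zero entries. -/
noncomputable def signChanges (l : List ℝ) : ℕ :=
  let s := l.filter (fun x => x ≠ 0)
  (s.zip s.tail).countP (fun p => p.1 * p.2 < 0)

lemma zip_countP_cons (a : ℝ) (t : List ℝ) :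
    ((a :: t).zip t).countP (fun p => p.1 * p.2 < 0) =
      (if a * t.headI < 0 then 1 else 0) + (t.zip t.tail).countP (fun p => p.1 * p.2 < 0) := by
  cases t with
  | nil =>
      have : (List.headI ([] : List ℝ)) = 0 := rfl
      simp [this]
  | cons b t' => simp [List.countP_cons]; exact (Nat.add_comm _ _).trans (by congr 1)

lemma signChanges_cons (a : ℝ) (l : List ℝ) :
    signChanges (a :: l) =
      (if a ≠ 0 ∧ a * (l.filter (fun x => x ≠ 0)).headI < 0 then 1 else 0) + signChanges l := by
  by_cases ha : a = 0
  · simp [signChanges, ha]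
  · have hf : (a :: l).filter (fun x => x ≠ 0) = a :: l.filter (fun x => x ≠ 0) := by
      simp [List.filter_cons, ha]
    rw [signChanges, signChanges]
    simp only [hf, List.tail_cons]
    rw [zip_countP_cons]
    simp [ha]

noncomputable def seqD (P : ℝ[X]) (x : ℝ) : List ℝ :=
  List.ofFn fun i : Fin (P.natDegree + 1) => (Polynomial.derivative^[i.1] P).eval x

noncomputable def nuBF (P : ℝ[X]) (x : ℝ) : ℕ := signChanges (seqD P x)

noncomputable def fnz (P : ℝ[X]) (x : ℝ) : ℝ := ((seqD P x).filter (fun t => t ≠ 0)).headI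


lemma coeff_iter_ne_zero {P : ℝ[X]} (hP : P ≠ 0) {k : ℕ} (hk : k ≤ P.natDegree) :
    (Polynomial.derivative^[k] P).coeff (P.natDegree - k) ≠ 0 := by
  rw [Polynomial.coeff_iterate_derivative, Nat.sub_add_cancel hk]
  have h2 : P.natDegree.descFactorial k ≠ 0 := fun h =>
    absurd (Nat.descFactorial_eq_zero_iff_lt.mp h) (not_lt.mpr hk)
  have h3 : P.coeff P.natDegree ≠ 0 := Polynomial.leadingCoeff_ne_zero.mpr hP
  exact smul_ne_zero h2 h3

lemma iter_ne_zero {P : ℝ[X]} (hP : P ≠ 0) {k : ℕ} (hk : k ≤ P.natDegree) :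
    Polynomial.derivative^[k] P ≠ 0 := fun h => by
  have := coeff_iter_ne_zero hP hk
  rw [h] at this; simp at this

lemma natDegree_iter {P : ℝ[X]} (hP : P ≠ 0) {k : ℕ} (hk : k ≤ P.natDegree) :
    (Polynomial.derivative^[k] P).natDegree = P.natDegree - k :=
  le_antisymm (Polynomial.natDegree_iterate_derivative P k)
    (Polynomial.le_natDegree_of_ne_zero (coeff_iter_ne_zero hP hk))

lemma eval_top_ne_zero {P : ℝ[X]} (hP : P ≠ 0) (x : ℝ) :
    (Polynomial.derivative^[P.natDegree] P).eval x ≠ 0 := by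
  set Q := Polynomial.derivative^[P.natDegree] P with hQ
  have hQ0 : Q ≠ 0 := iter_ne_zero hP le_rfl
  have hdeg : Q.natDegree = 0 := by
    rw [hQ, natDegree_iter hP le_rfl, Nat.sub_self]
  rw [Polynomial.eq_C_of_natDegree_eq_zero hdeg]
  simp only [Polynomial.eval_C]
  intro h
  apply hQ0
  rw [Polynomial.eq_C_of_natDegree_eq_zero hdeg, h, map_zero]

lemma seqD_head (P : ℝ[X]) (x : ℝ) :
    seqD P x = P.eval x ::
      List.ofFn (fun i : Fin P.natDegree => (Polynomial.derivative^[(i : ℕ)+1] P).eval x) := by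
  rw [seqD, List.ofFn_succ]
  simp [Function.iterate_zero_apply]

lemma natDegree_deriv_succ {P : ℝ[X]} {m : ℕ} (h : P.natDegree = m + 1) :
    (Polynomial.derivative P).natDegree = m ∧ Polynomial.derivative P ≠ 0 := by
  have hP : P ≠ 0 := fun h0 => by simp [h0] at h
  have h1 : Polynomial.derivative P = Polynomial.derivative^[1] P := rfl
  constructor
  · rw [h1, natDegree_iter hP (by omega), h]; omega
  · rw [h1]; exact iter_ne_zero hP (by omega)

lemma seqD_cons {P : ℝ[X]} {m : ℕ} (h : P.natDegree = m + 1) (x : ℝ) :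
    seqD P x = P.eval x :: seqD (Polynomial.derivative P) x := by
  rw [seqD_head]
  congr 1
  rw [seqD]
  obtain ⟨hd, -⟩ := natDegree_deriv_succ h
  have hmn : P.natDegree = (Polynomial.derivative P).natDegree + 1 := by rw [hd, h]
  rw [List.ofFn_congr hmn.symm]
  simp [Function.iterate_succ_apply, Fin.coe_cast]

lemma fnz_ne_zero {P : ℝ[X]} (hP : P ≠ 0) (x : ℝ) : fnz P x ≠ 0 := by
  have hmem : (Polynomial.derivative^[P.natDegree] P).eval x ∈ seqD P x := by
    rw [seqD]
    exact List.mem_ofFn.mpr ⟨Fin.last _, rfl⟩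
  have hne : (seqD P x).filter (fun t => t ≠ 0) ≠ [] := by
    intro h
    have hm : (Polynomial.derivative^[P.natDegree] P).eval x ∈
        (seqD P x).filter (fun t => t ≠ 0) :=
      List.mem_filter.mpr ⟨hmem, by simpa using eval_top_ne_zero hP x⟩
    rw [h] at hm
    simp at hm
  cases hf : (seqD P x).filter (fun t => t ≠ 0) with
  | nil => exact absurd hf hne
  | cons a l =>
      have ha : a ∈ (seqD P x).filter (fun t => t ≠ 0) := by rw [hf]; exact List.mem_cons_self
      have := (List.mem_filter.mp ha).2
      rw [fnz, hf]
      simpa using this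

lemma fnz_of_eval_ne {P : ℝ[X]} {x : ℝ} (h : P.eval x ≠ 0) : fnz P x = P.eval x := by
  rw [fnz, seqD_head, List.filter_cons]
  simp [h]

lemma fnz_of_eval_eq {P : ℝ[X]} {m : ℕ} {x : ℝ} (h : P.natDegree = m + 1)
    (hx : P.eval x = 0) : fnz P x = fnz (Polynomial.derivative P) x := by
  rw [fnz, fnz, seqD_cons h, List.filter_cons]
  simp [hx]

lemma nu_cons {P : ℝ[X]} {m : ℕ} (h : P.natDegree = m + 1) (x : ℝ) :
    nuBF P x = (if P.eval x ≠ 0 ∧ P.eval x * fnz (Polynomial.derivative P) x < 0 then 1 else 0)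
      + nuBF (Polynomial.derivative P) x := by
  rw [nuBF, seqD_cons h, signChanges_cons]
  rfl

lemma signChanges_singleton (a : ℝ) : signChanges [a] = 0 := by
  by_cases h : a = 0 <;> simp [signChanges, h]

lemma nu_of_natDegree_zero {P : ℝ[X]} (h : P.natDegree = 0) (x : ℝ) : nuBF P x = 0 := by
  have h2 : List.ofFn (fun i : Fin P.natDegree => (Polynomial.derivative^[(i : ℕ)+1] P).eval x) = [] :=
    List.eq_nil_of_length_eq_zero (by simp [h])
  rw [nuBF, seqD_head, h2, signChanges_singleton]

lemma sign_nbhd {P : ℝ[X]} {c : ℝ} (h : P.eval c ≠ 0) :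
    ∃ δ > 0, ∀ x : ℝ, |x - c| < δ → P.eval x * P.eval c > 0 := by
  have hc : ContinuousAt (fun x => P.eval x * P.eval c) c :=
    (P.continuous.mul continuous_const).continuousAt
  have hpos : P.eval c * P.eval c > 0 := mul_self_pos.mpr h
  have h2 : (fun x => P.eval x * P.eval c) ⁻¹' Set.Ioi 0 ∈ nhds c := hc (Ioi_mem_nhds hpos)
  rcases Metric.mem_nhds_iff.mp h2 with ⟨δ, hδ, hball⟩
  exact ⟨δ, hδ, fun x hx => hball (by simpa [Real.dist_eq] using hx)⟩

lemma eval_pos_right {P : ℝ[X]} {c d : ℝ} (hc : P.eval c = 0)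
    (hpos : ∀ x ∈ Set.Ioo c d, 0 < (Polynomial.derivative P).eval x) :
    ∀ x ∈ Set.Ioo c d, 0 < P.eval x := by
  intro x hx
  have hmono : StrictMonoOn (fun y => P.eval y) (Set.Icc c d) :=
    strictMonoOn_of_deriv_pos (convex_Icc c d) P.continuous.continuousOn
      (fun y hy => by
        rw [interior_Icc] at hy
        rw [Polynomial.deriv]
        exact hpos y hy)
  have := hmono (Set.mem_Icc.mpr ⟨le_refl c, le_of_lt (hx.1.trans hx.2)⟩)
    (Set.mem_Icc.mpr ⟨le_of_lt hx.1, le_of_lt hx.2⟩) hx.1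
  simpa [hc] using this

lemma eval_neg_right {P : ℝ[X]} {c d : ℝ} (hc : P.eval c = 0)
    (hneg : ∀ x ∈ Set.Ioo c d, (Polynomial.derivative P).eval x < 0) :
    ∀ x ∈ Set.Ioo c d, P.eval x < 0 := by
  intro x hx
  have hmono : StrictAntiOn (fun y => P.eval y) (Set.Icc c d) :=
    strictAntiOn_of_deriv_neg (convex_Icc c d) P.continuous.continuousOn
      (fun y hy => by
        rw [interior_Icc] at hy
        rw [Polynomial.deriv]
        exact hneg y hy)
  have := hmono (Set.mem_Icc.mpr ⟨le_refl c, le_of_lt (hx.1.trans hx.2)⟩)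
    (Set.mem_Icc.mpr ⟨le_of_lt hx.1, le_of_lt hx.2⟩) hx.1
  simpa [hc] using this

lemma eval_neg_left {P : ℝ[X]} {c d : ℝ} (hc : P.eval c = 0)
    (hpos : ∀ x ∈ Set.Ioo d c, 0 < (Polynomial.derivative P).eval x) :
    ∀ x ∈ Set.Ioo d c, P.eval x < 0 := by
  intro x hx
  have hmono : StrictMonoOn (fun y => P.eval y) (Set.Icc d c) :=
    strictMonoOn_of_deriv_pos (convex_Icc d c) P.continuous.continuousOn
      (fun y hy => by
        rw [interior_Icc] at hy
        rw [Polynomial.deriv]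
        exact hpos y hy)
  have := hmono (Set.mem_Icc.mpr ⟨le_of_lt hx.1, le_of_lt hx.2⟩)
    (Set.mem_Icc.mpr ⟨le_of_lt (hx.1.trans hx.2), le_refl c⟩) hx.2
  simpa [hc] using this

lemma eval_pos_left {P : ℝ[X]} {c d : ℝ} (hc : P.eval c = 0)
    (hneg : ∀ x ∈ Set.Ioo d c, (Polynomial.derivative P).eval x < 0) :
    ∀ x ∈ Set.Ioo d c, 0 < P.eval x := by
  intro x hx
  have hmono : StrictAntiOn (fun y => P.eval y) (Set.Icc d c) :=
    strictAntiOn_of_deriv_neg (convex_Icc d c) P.continuous.continuousOn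
      (fun y hy => by
        rw [interior_Icc] at hy
        rw [Polynomial.deriv]
        exact hneg y hy)
  have := hmono (Set.mem_Icc.mpr ⟨le_of_lt hx.1, le_of_lt hx.2⟩)
    (Set.mem_Icc.mpr ⟨le_of_lt (hx.1.trans hx.2), le_refl c⟩) hx.2
  simpa [hc] using this

lemma mult_succ {P : ℝ[X]} {m : ℕ} (h : P.natDegree = m + 1) {c : ℝ} (hc : P.eval c = 0) :
    P.rootMultiplicity c = (Polynomial.derivative P).rootMultiplicity c + 1 := by
  have hP : P ≠ 0 := fun h0 => by simp [h0] at h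
  have h1 := Polynomial.derivative_rootMultiplicity_of_root (p := P) (t := c) hc
  have h2 : 0 < P.rootMultiplicity c := (Polynomial.rootMultiplicity_pos hP).mpr hc
  omega

set_option maxHeartbeats 2000000 in
lemma localBF (n : ℕ) : ∀ (P : ℝ[X]), P ≠ 0 → P.natDegree = n → ∀ c : ℝ,
    (∃ δ > 0, ∀ x ∈ Set.Ioo c (c + δ),
        P.eval x * fnz P c > 0 ∧ nuBF P x = nuBF P c) ∧
    (∃ δ > 0, ∀ x ∈ Set.Ioo (c - δ) c,
        P.eval x * fnz P c * (-1) ^ (P.rootMultiplicity c) > 0 ∧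
        nuBF P c + P.rootMultiplicity c ≤ nuBF P x) := by
  induction n with
  | zero =>
      intro P hP h0 c
      have hcoeff : P.coeff 0 ≠ 0 := by
        intro h
        apply hP
        rw [Polynomial.eq_C_of_natDegree_eq_zero h0, h, map_zero]
      have heval : ∀ x : ℝ, P.eval x = P.coeff 0 := by
        intro x
        conv_lhs => rw [Polynomial.eq_C_of_natDegree_eq_zero h0]
        simp
      have hfz : ∀ x : ℝ, fnz P x = P.coeff 0 := fun x => by
        rw [fnz_of_eval_ne (by rw [heval x]; exact hcoeff), heval]
      have hmult : P.rootMultiplicity c = 0 :=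
        Polynomial.rootMultiplicity_eq_zero (by rw [Polynomial.IsRoot, heval]; exact hcoeff)
      have hnu : ∀ x : ℝ, nuBF P x = 0 := nu_of_natDegree_zero h0
      refine ⟨⟨1, one_pos, fun x _ => ?_⟩, ⟨1, one_pos, fun x _ => ?_⟩⟩
      · rw [heval, hfz, hnu, hnu]
        exact ⟨mul_self_pos.mpr hcoeff, rfl⟩
      · rw [heval, hfz, hnu, hnu, hmult]
        simp [mul_self_pos.mpr hcoeff]
  | succ m ih =>
      intro P hP h0 c
      obtain ⟨hd1, hd2⟩ := natDegree_deriv_succ h0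
      obtain ⟨⟨δR, hδR, hR⟩, ⟨δL, hδL, hL⟩⟩ := ih (Polynomial.derivative P) hd2 hd1 c
      have hfz' : fnz (Polynomial.derivative P) c ≠ 0 := fnz_ne_zero hd2 c
      by_cases hPc : P.eval c = 0
      · -- Case B : c is a root of P
        have hfzc : fnz P c = fnz (Polynomial.derivative P) c := fnz_of_eval_eq h0 hPc
        have hnuc : nuBF P c = nuBF (Polynomial.derivative P) c := by
          rw [nu_cons h0 c, if_neg (by simp [hPc]), zero_add]
        have hmult : P.rootMultiplicity c
            = (Polynomial.derivative P).rootMultiplicity c + 1 := mult_succ h0 hPc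
        constructor
        · -- right side
          refine ⟨δR, hδR, fun x hx => ?_⟩
          obtain ⟨hsgn', hnu'⟩ := hR x hx
          have hP'x : (Polynomial.derivative P).eval x ≠ 0 := fun h => by
            rw [h, zero_mul] at hsgn'; exact lt_irrefl 0 hsgn'
          have hPx : P.eval x * fnz (Polynomial.derivative P) c > 0 := by
            rcases lt_or_gt_of_ne hfz' with hs | hs
            · have hneg : ∀ y ∈ Set.Ioo c (c + δR), (Polynomial.derivative P).eval y < 0 :=
                fun y hy => by nlinarith [(hR y hy).1]
              nlinarith [eval_neg_right hPc hneg x hx]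
            · have hpos : ∀ y ∈ Set.Ioo c (c + δR), 0 < (Polynomial.derivative P).eval y :=
                fun y hy => by nlinarith [(hR y hy).1]
              nlinarith [eval_pos_right hPc hpos x hx]
          have hPx0 : P.eval x ≠ 0 := fun h => by rw [h, zero_mul] at hPx; exact lt_irrefl 0 hPx
          refine ⟨by rw [hfzc]; exact hPx, ?_⟩
          have hcond : ¬(P.eval x ≠ 0 ∧ P.eval x * fnz (Polynomial.derivative P) x < 0) := by
            rintro ⟨-, hlt⟩
            rw [fnz_of_eval_ne hP'x] at hlt
            nlinarith [mul_pos hPx hsgn', sq_nonneg (fnz (Polynomial.derivative P) c)]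
          rw [nu_cons h0 x, hnuc, hnu', if_neg hcond, zero_add]
        · -- left side
          refine ⟨δL, hδL, fun x hx => ?_⟩
          obtain ⟨hsgn', hnu'⟩ := hL x hx
          rcases Nat.even_or_odd ((Polynomial.derivative P).rootMultiplicity c) with hpar | hpar
          · -- even multiplicity of c in P'
            rw [hpar.neg_one_pow, mul_one] at hsgn'
            have hP'sgn : ∀ y ∈ Set.Ioo (c - δL) c,
                (Polynomial.derivative P).eval y * fnz (Polynomial.derivative P) c > 0 :=
              fun y hy => by
                have := (hL y hy).1
                rw [hpar.neg_one_pow, mul_one] at this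
                exact this
            rcases lt_or_gt_of_ne hfz' with hs | hs
            · have hneg : ∀ y ∈ Set.Ioo (c - δL) c, (Polynomial.derivative P).eval y < 0 :=
                fun y hy => by nlinarith [hP'sgn y hy]
              have hPx : 0 < P.eval x := eval_pos_left hPc hneg x hx
              have hP'xneg := hneg x hx
              have hcond : P.eval x ≠ 0 ∧ P.eval x * fnz (Polynomial.derivative P) x < 0 := by
                refine ⟨ne_of_gt hPx, ?_⟩
                rw [fnz_of_eval_ne (ne_of_lt hP'xneg)]
                nlinarith
              refine ⟨?_, ?_⟩
              · rw [hfzc, hmult, pow_succ, hpar.neg_one_pow, one_mul]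
                nlinarith
              · rw [nu_cons h0 x, hnuc, hmult, if_pos hcond]
                omega
            · have hpos : ∀ y ∈ Set.Ioo (c - δL) c, 0 < (Polynomial.derivative P).eval y :=
                fun y hy => by nlinarith [hP'sgn y hy]
              have hPx : P.eval x < 0 := eval_neg_left hPc hpos x hx
              have hP'xpos := hpos x hx
              have hcond : P.eval x ≠ 0 ∧ P.eval x * fnz (Polynomial.derivative P) x < 0 := by
                refine ⟨ne_of_lt hPx, ?_⟩
                rw [fnz_of_eval_ne (ne_of_gt hP'xpos)]
                nlinarith
              refine ⟨?_, ?_⟩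
              · rw [hfzc, hmult, pow_succ, hpar.neg_one_pow, one_mul]
                nlinarith
              · rw [nu_cons h0 x, hnuc, hmult, if_pos hcond]
                omega
          · -- odd multiplicity of c in P'
            rw [hpar.neg_one_pow] at hsgn'
            have hP'sgn : ∀ y ∈ Set.Ioo (c - δL) c,
                (Polynomial.derivative P).eval y * fnz (Polynomial.derivative P) c < 0 :=
              fun y hy => by
                have := (hL y hy).1
                rw [hpar.neg_one_pow] at this
                nlinarith
            rcases lt_or_gt_of_ne hfz' with hs | hs
            · have hpos : ∀ y ∈ Set.Ioo (c - δL) c, 0 < (Polynomial.derivative P).eval y :=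
                fun y hy => by nlinarith [hP'sgn y hy]
              have hPx : P.eval x < 0 := eval_neg_left hPc hpos x hx
              have hP'xpos := hpos x hx
              have hcond : P.eval x ≠ 0 ∧ P.eval x * fnz (Polynomial.derivative P) x < 0 := by
                refine ⟨ne_of_lt hPx, ?_⟩
                rw [fnz_of_eval_ne (ne_of_gt hP'xpos)]
                nlinarith
              refine ⟨?_, ?_⟩
              · rw [hfzc, hmult, pow_succ, hpar.neg_one_pow]
                nlinarith
              · rw [nu_cons h0 x, hnuc, hmult, if_pos hcond]
                omega
            · have hneg : ∀ y ∈ Set.Ioo (c - δL) c, (Polynomial.derivative P).eval y < 0 :=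
                fun y hy => by nlinarith [hP'sgn y hy]
              have hPx : 0 < P.eval x := eval_pos_left hPc hneg x hx
              have hP'xneg := hneg x hx
              have hcond : P.eval x ≠ 0 ∧ P.eval x * fnz (Polynomial.derivative P) x < 0 := by
                refine ⟨ne_of_gt hPx, ?_⟩
                rw [fnz_of_eval_ne (ne_of_lt hP'xneg)]
                nlinarith
              refine ⟨?_, ?_⟩
              · rw [hfzc, hmult, pow_succ, hpar.neg_one_pow]
                nlinarith
              · rw [nu_cons h0 x, hnuc, hmult, if_pos hcond]
                omega
      · -- Case A : P.eval c ≠ 0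
        obtain ⟨δ₀, hδ₀, hsign⟩ := sign_nbhd hPc
        have hfzc : fnz P c = P.eval c := fnz_of_eval_ne hPc
        have hmult : P.rootMultiplicity c = 0 := Polynomial.rootMultiplicity_eq_zero hPc
        have hnuc : nuBF P c =
            (if P.eval c ≠ 0 ∧ P.eval c * fnz (Polynomial.derivative P) c < 0 then 1 else 0)
              + nuBF (Polynomial.derivative P) c := nu_cons h0 c
        constructor
        · -- right side
          refine ⟨min δ₀ δR, lt_min hδ₀ hδR, fun x hx => ?_⟩
          have hx0 : |x - c| < δ₀ := by
            rw [abs_lt]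
            constructor
            · nlinarith [hx.1]
            · nlinarith [hx.2, min_le_left δ₀ δR]
          have hsx : P.eval x * P.eval c > 0 := hsign x hx0
          have hxR : x ∈ Set.Ioo c (c + δR) :=
            ⟨hx.1, lt_of_lt_of_le hx.2 (by nlinarith [min_le_right δ₀ δR])⟩
          obtain ⟨hsgn', hnu'⟩ := hR x hxR
          have hP'x : (Polynomial.derivative P).eval x ≠ 0 := fun h => by
            rw [h, zero_mul] at hsgn'; exact lt_irrefl 0 hsgn'
          have hPx0 : P.eval x ≠ 0 := fun h => by rw [h, zero_mul] at hsx; exact lt_irrefl 0 hsx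
          refine ⟨by rw [hfzc]; exact hsx, ?_⟩
          rw [nu_cons h0 x, hnuc, hnu', fnz_of_eval_ne hP'x]
          have hiff : (P.eval x * (Polynomial.derivative P).eval x < 0)
              ↔ (P.eval c * fnz (Polynomial.derivative P) c < 0) := by
            constructor
            · intro hlt
              nlinarith [mul_pos hsx hsgn']
            · intro hlt
              nlinarith [mul_pos hsx hsgn', sq_nonneg (P.eval x * (Polynomial.derivative P).eval x)]
          congr 1
          simp only [hPx0, hPc, ne_eq, not_false_eq_true, true_and]
          exact if_congr hiff rfl rfl
        · -- left side
          refine ⟨min δ₀ δL, lt_min hδ₀ hδL, fun x hx => ?_⟩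
          have hx0 : |x - c| < δ₀ := by
            rw [abs_lt]
            constructor
            · nlinarith [hx.1, min_le_left δ₀ δL]
            · nlinarith [hx.2]
          have hsx : P.eval x * P.eval c > 0 := hsign x hx0
          have hxL : x ∈ Set.Ioo (c - δL) c :=
            ⟨lt_of_le_of_lt (by nlinarith [min_le_right δ₀ δL]) hx.1, hx.2⟩
          obtain ⟨hsgn', hnu'⟩ := hL x hxL
          have hP'x : (Polynomial.derivative P).eval x ≠ 0 := fun h => by
            rw [h, zero_mul, zero_mul] at hsgn'; exact lt_irrefl 0 hsgn'
          have hPx0 : P.eval x ≠ 0 := fun h => by rw [h, zero_mul] at hsx; exact lt_irrefl 0 hsx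
          refine ⟨by rw [hfzc, hmult, pow_zero, mul_one]; exact hsx, ?_⟩
          rw [hmult, add_zero, nu_cons h0 x, hnuc, fnz_of_eval_ne hP'x]
          by_cases hchi : P.eval c * fnz (Polynomial.derivative P) c < 0
          · rw [if_pos ⟨hPc, hchi⟩]
            rcases Nat.even_or_odd ((Polynomial.derivative P).rootMultiplicity c) with he | ho
            · have hP'sgn : (Polynomial.derivative P).eval x
                  * fnz (Polynomial.derivative P) c > 0 := by
                rw [he.neg_one_pow, mul_one] at hsgn'
                exact hsgn'
              have hxx : P.eval x * (Polynomial.derivative P).eval x < 0 := by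
                nlinarith [mul_pos hsx hP'sgn,
                  mul_pos (mul_pos hsx hP'sgn) (mul_self_pos.mpr hPc)]
              rw [if_pos ⟨hPx0, hxx⟩]
              omega
            · have h1 : 1 ≤ (Polynomial.derivative P).rootMultiplicity c := ho.pos
              have h2 : nuBF (Polynomial.derivative P) c + 1 ≤ nuBF (Polynomial.derivative P) x :=
                le_trans (by omega) hnu'
              split <;> omega
          · rw [if_neg (by rintro ⟨-, h⟩; exact hchi h)]
            have h2 : nuBF (Polynomial.derivative P) c ≤ nuBF (Polynomial.derivative P) x :=
              le_trans (by omega) hnu'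
            split <;> omega

lemma card_filter_split (c : ℝ) (p q : ℝ → Prop) [DecidablePred p] [DecidablePred q]
    (s : Multiset ℝ) (h : ∀ r ∈ s, p r ↔ q r ∨ r = c) (hq : ∀ r ∈ s, ¬(q r ∧ r = c)) :
    Multiset.card (s.filter p) = Multiset.card (s.filter q) + s.count c := by
  induction s using Multiset.induction with
  | empty => simp
  | cons a s ih =>
      have ha := h a (Multiset.mem_cons_self a s)
      have hqa := hq a (Multiset.mem_cons_self a s)
      have ihs := ih (fun r hr => h r (Multiset.mem_cons_of_mem hr))
        (fun r hr => hq r (Multiset.mem_cons_of_mem hr))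
      by_cases hpa : p a
      · rcases ha.mp hpa with hqa' | hca
        · have hac : a ≠ c := fun hac => hqa ⟨hqa', hac⟩
          rw [Multiset.filter_cons_of_pos _ hpa, Multiset.filter_cons_of_pos _ hqa',
            Multiset.count_cons_of_ne (Ne.symm hac)]
          simp [ihs]
          omega
        · have hqa' : ¬ q a := fun hq' => hqa ⟨hq', hca⟩
          rw [Multiset.filter_cons_of_pos _ hpa, Multiset.filter_cons_of_neg _ hqa', hca,
            Multiset.count_cons_self]
          simp [ihs]
          omega
      · have hqa' : ¬ q a := fun hq' => hpa (ha.mpr (Or.inl hq'))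
        have hac : a ≠ c := fun hac => hpa (ha.mpr (Or.inr hac))
        rw [Multiset.filter_cons_of_neg _ hpa, Multiset.filter_cons_of_neg _ hqa',
          Multiset.count_cons_of_ne (Ne.symm hac), ihs]

lemma globalBF {P : ℝ[X]} (hP : P ≠ 0) {a b : ℝ} (hab : a < b) :
    (Multiset.card (P.roots.filter (fun r => a < r ∧ r ≤ b)) : ℤ) + (nuBF P b : ℤ)
      ≤ (nuBF P a : ℤ) := by
  classical
  set g : ℝ → ℤ := fun y =>
    (nuBF P y : ℤ) + (Multiset.card (P.roots.filter (fun r => a < r ∧ r ≤ y)) : ℤ) with hg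
  suffices h : g b ≤ g a by
    have ha0 : (P.roots.filter (fun r => a < r ∧ r ≤ a)) = 0 :=
      Multiset.filter_eq_nil.2 (fun r _ hr => absurd hr.2 (not_le.mpr hr.1))
    rw [hg] at h
    simp only [ha0] at h
    simp only [Multiset.card_zero, Nat.cast_zero, add_zero] at h
    linarith
  have hlocR : ∀ c : ℝ, ∃ δ > 0, ∀ x ∈ Set.Ioo c (c + δ), g x = g c := by
    intro c
    obtain ⟨⟨δ, hδ, hR⟩, -⟩ := localBF P.natDegree P hP rfl c
    refine ⟨δ, hδ, fun x hx => ?_⟩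
    have hnu : nuBF P x = nuBF P c := (hR x hx).2
    have hW : P.roots.filter (fun r => a < r ∧ r ≤ x)
        = P.roots.filter (fun r => a < r ∧ r ≤ c) := by
      apply Multiset.filter_congr
      intro r hr
      have hroot : P.eval r = 0 := (Polynomial.mem_roots'.mp hr).2
      constructor
      · rintro ⟨h1, h2⟩
        refine ⟨h1, ?_⟩
        by_contra hrc
        push_neg at hrc
        have := (hR r ⟨hrc, lt_of_le_of_lt h2 hx.2⟩).1
        rw [hroot, zero_mul] at this
        exact lt_irrefl 0 this
      · rintro ⟨h1, h2⟩
        exact ⟨h1, le_trans h2 (le_of_lt hx.1)⟩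
    rw [hg]
    simp only [hnu, hW]
  have hlocL : ∀ c : ℝ, a < c → ∃ δ > 0, ∀ x ∈ Set.Ioo (c - δ) c, a < x → g c ≤ g x := by
    intro c hac
    obtain ⟨-, ⟨δ, hδ, hL⟩⟩ := localBF P.natDegree P hP rfl c
    refine ⟨δ, hδ, fun x hx hax => ?_⟩
    have hnu : nuBF P c + P.rootMultiplicity c ≤ nuBF P x := (hL x hx).2
    have hW : Multiset.card (P.roots.filter (fun r => a < r ∧ r ≤ c))
        = Multiset.card (P.roots.filter (fun r => a < r ∧ r ≤ x)) + P.rootMultiplicity c := by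
      rw [← Polynomial.count_roots]
      apply card_filter_split
      · intro r hr
        have hroot : P.eval r = 0 := (Polynomial.mem_roots'.mp hr).2
        constructor
        · rintro ⟨h1, h2⟩
          rcases eq_or_lt_of_le h2 with he | hlt
          · exact Or.inr he
          · left
            refine ⟨h1, ?_⟩
            by_contra hxr
            push_neg at hxr
            have := (hL r ⟨lt_trans hx.1 hxr, hlt⟩).1
            rw [hroot, zero_mul, zero_mul] at this
            exact lt_irrefl 0 this
        · rintro (⟨h1, h2⟩ | he)
          · exact ⟨h1, le_trans h2 (le_of_lt hx.2)⟩
          · rw [he]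
            exact ⟨hac, le_refl c⟩
      · rintro r hr ⟨⟨h1, h2⟩, he⟩
        rw [he] at h2
        exact absurd hx.2 (not_lt.mpr h2)
    rw [hg]
    simp only
    rw [hW]
    push_cast
    omega
  set T : Set ℝ := {y | y ∈ Set.Icc a b ∧ ∀ z ∈ Set.Icc a y, g z ≤ g a} with hT
  have haT : a ∈ T := by
    refine ⟨⟨le_refl a, le_of_lt hab⟩, fun z hz => ?_⟩
    have : z = a := le_antisymm hz.2 hz.1
    rw [this]
  have hTbdd : BddAbove T := ⟨b, fun y hy => hy.1.2⟩
  have hTne : T.Nonempty := ⟨a, haT⟩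
  set t := sSup T with htdef
  have hta : a ≤ t := le_csSup hTbdd haT
  have htb : t ≤ b := csSup_le hTne (fun y hy => hy.1.2)
  have hlt : ∀ z, a ≤ z → z < t → g z ≤ g a := by
    intro z haz hzt
    obtain ⟨y, hyT, hzy⟩ := exists_lt_of_lt_csSup hTne hzt
    exact hyT.2 z ⟨haz, le_of_lt hzy⟩
  have htT : t ∈ T := by
    refine ⟨⟨hta, htb⟩, fun z hz => ?_⟩
    rcases lt_or_eq_of_le hz.2 with hz2 | hz2
    · exact hlt z hz.1 hz2
    · rcases eq_or_lt_of_le hta with hat | hat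
      · rw [hz2, ← hat]
      · obtain ⟨δ, hδ, hloc⟩ := hlocL t hat
        set x := max ((a + t) / 2) (t - δ / 2) with hx
        have hx1 : x < t := by
          apply max_lt
          · linarith
          · linarith
        have hx2 : t - δ < x := by
          have := le_max_right ((a + t) / 2) (t - δ / 2)
          linarith
        have hx3 : a < x := by
          have := le_max_left ((a + t) / 2) (t - δ / 2)
          linarith
        have h1 : g t ≤ g x := hloc x ⟨hx2, hx1⟩ hx3
        have h2 : g x ≤ g a := hlt x (le_of_lt hx3) hx1
        rw [hz2]
        exact le_trans h1 h2
  rcases lt_or_eq_of_le htb with htb' | htb'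
  · exfalso
    obtain ⟨δ, hδ, hloc⟩ := hlocR t
    set y := min b (t + δ / 2) with hy
    have hy1 : t < y := lt_min htb' (by linarith)
    have hy2 : y ≤ b := min_le_left _ _
    have hyT : y ∈ T := by
      refine ⟨⟨le_trans hta (le_of_lt hy1), hy2⟩, fun z hz => ?_⟩
      rcases le_or_gt z t with hzt | hzt
      · exact htT.2 z ⟨hz.1, hzt⟩
      · have hzy : z < t + δ := by
          have := min_le_right b (t + δ / 2)
          have := hz.2
          simp only [hy] at this
          linarith [le_trans hz.2 (min_le_right b (t + δ / 2))]
        have := hloc z ⟨hzt, hzy⟩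
        rw [this]
        exact htT.2 t ⟨hta, le_refl t⟩
    exact absurd (le_csSup hTbdd hyT) (not_le.mpr hy1)
  · have := htT.2 b ⟨le_of_lt hab, by rw [← htb']⟩
    rw [hg] at this ⊢
    exact this

/-- Budan–Fourier bound: for a real polynomial `P` of degree `n`, the number of
roots of `P` in `(a, b]`, counted with multiplicity, is at most
`ν_P(a) - ν_P(b)`, where `ν_P(x)` is the number of sign changes in the
sequence `(P(x), P'(x), …, P⁽ⁿ⁾(x))`. -/
theorem budan_fourier (n : ℕ) (P : ℝ[X]) (hP0 : P ≠ 0) (hP : P.natDegree = n)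
    (a b : ℝ) (hab : a < b) :
    (Multiset.card (P.roots.filter (fun r => a < r ∧ r ≤ b)) : ℤ) ≤
      (signChanges (List.ofFn fun i : Fin (n + 1) =>
          (Polynomial.derivative^[i.1] P).eval a) : ℤ) -
        (signChanges (List.ofFn fun i : Fin (n + 1) =>
          (Polynomial.derivative^[i.1] P).eval b) : ℤ) := by
  subst hP
  have h := globalBF hP0 hab
  have ea : signChanges (List.ofFn fun i : Fin (P.natDegree + 1) =>
      (Polynomial.derivative^[i.1] P).eval a) = nuBF P a := rfl
  have eb : signChanges (List.ofFn fun i : Fin (P.natDegree + 1) =>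
      (Polynomial.derivative^[i.1] P).eval b) = nuBF P b := rfl
  rw [ea, eb]
  linarith
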